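/- (Directional Danskin, inner semicontinuous case, upper estimate) Let f: ℝⁿ × ℝᵐ → ℝ be continuous, Γ ⊆ ℝᵐ closed, and suppose the partial gradient ∇ₓf(x, y) exists and is jointly continuous on U(x̄) × Γ for some neighborhood U(x̄) of x̄. Let V(x) := inf_{y ∈ Γ} f(x, y) and S(x) := argmin_{y ∈ Γ} f(x, y). If there exists ȳ ∈ S(x̄) such that S is inner semicontinuous at (x̄, ȳ) in direction u, then the directional limiting subdifferential satisfies ∂V(x̄; u) ⊆ {∇ₓf(x̄, ȳ)}. -/

import Mathlib

open Filter Topology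

noncomputable section

abbrev Euc (n : ℕ) := EuclideanSpace ℝ (Fin n)

/-- The directional neighborhood 𝒱_{ε,δ}(d). -/
def dirNbhd {n : ℕ} (ε δ : ℝ) (d : Euc n) : Set (Euc n) :=
  {z | ‖z‖ < ε ∧ ‖‖d‖ • z - ‖z‖ • d‖ ≤ δ * (‖z‖ * ‖d‖)}

/-- The translated directional neighborhood xb + 𝒱_{ε,δ}(d). -/
def dirNbhdPt {n : ℕ} (xb : Euc n) (ε δ : ℝ) (d : Euc n) : Set (Euc n) :=
  (fun z => xb + z) '' dirNbhd ε δ d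

/-- xₖ → xb in direction u : xₖ = xb + tₖ • uₖ with tₖ ↓ 0, uₖ → u. -/
def TendstoDir {n : ℕ} (x : ℕ → Euc n) (xb u : Euc n) : Prop :=
  ∃ t : ℕ → ℝ, ∃ v : ℕ → Euc n,
    (∀ k, 0 < t k) ∧ Tendsto t atTop (𝓝 0) ∧ Tendsto v atTop (𝓝 u) ∧
    ∀ k, x k = xb + t k • v k

/-- The tangent (contingent) cone. -/
def tangentConeSeq {n : ℕ} (Ω : Set (Euc n)) (xb : Euc n) : Set (Euc n) :=
  {d | ∃ t : ℕ → ℝ, ∃ dk : ℕ → Euc n,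
    (∀ k, 0 < t k) ∧ Tendsto t atTop (𝓝 0) ∧ Tendsto dk atTop (𝓝 d) ∧
    ∀ k, xb + t k • dk k ∈ Ω}

/-- The regular (Fréchet) normal cone; empty at points outside Ω. -/
def regNormal {n : ℕ} (Ω : Set (Euc n)) (x : Euc n) : Set (Euc n) :=
  {ζ | x ∈ Ω ∧ ∀ ε > (0:ℝ), ∃ ρ > (0:ℝ), ∀ y ∈ Ω, ‖y - x‖ < ρ →
    (@inner ℝ _ _ ζ (y - x)) ≤ ε * ‖y - x‖}

/-- The limiting (Mordukhovich) normal cone. -/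
def limNormal {n : ℕ} (Ω : Set (Euc n)) (xb : Euc n) : Set (Euc n) :=
  {ζ | ∃ xk : ℕ → Euc n, ∃ ζk : ℕ → Euc n,
    Tendsto xk atTop (𝓝 xb) ∧ Tendsto ζk atTop (𝓝 ζ) ∧
    ∀ k, ζk k ∈ regNormal Ω (xk k)}

/-- The directional limiting normal cone N_Ω(xb; d). -/
def dirNormal {n : ℕ} (Ω : Set (Euc n)) (xb d : Euc n) : Set (Euc n) :=
  {ζ | ∃ t : ℕ → ℝ, ∃ dk ζk : ℕ → Euc n,
    (∀ k, 0 < t k) ∧ Tendsto t atTop (𝓝 0) ∧ Tendsto dk atTop (𝓝 d) ∧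
    Tendsto ζk atTop (𝓝 ζ) ∧ ∀ k, ζk k ∈ regNormal Ω (xb + t k • dk k)}

/-- The regular (Fréchet) subdifferential of an extended-real-valued function. -/
def regSubdiff {n : ℕ} (f : Euc n → EReal) (x : Euc n) : Set (Euc n) :=
  {ξ | ∀ ε > (0:ℝ), ∃ ρ > (0:ℝ), ∀ y, ‖y - x‖ < ρ →
    f x + (((@inner ℝ _ _ ξ (y - x)) - ε * ‖y - x‖ : ℝ) : EReal) ≤ f y}

/-- The limiting (Mordukhovich) subdifferential. -/
def limSubdiff {n : ℕ} (f : Euc n → EReal) (x : Euc n) : Set (Euc n) :=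
  {ξ | ∃ xk ξk : ℕ → Euc n, Tendsto xk atTop (𝓝 x) ∧
    Tendsto (fun k => f (xk k)) atTop (𝓝 (f x)) ∧ Tendsto ξk atTop (𝓝 ξ) ∧
    ∀ k, ξk k ∈ regSubdiff f (xk k)}

/-- The directional limiting subdifferential ∂f(xb; u). -/
def dirLimSubdiff {n : ℕ} (f : Euc n → EReal) (xb u : Euc n) : Set (Euc n) :=
  {ξ | ∃ xk ξk : ℕ → Euc n, TendstoDir xk xb u ∧
    Tendsto (fun k => f (xk k)) atTop (𝓝 (f xb)) ∧ Tendsto ξk atTop (𝓝 ξ) ∧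
    ∀ k, ξk k ∈ regSubdiff f (xk k)}

/-- The directional singular subdifferential ∂^∞ f(xb; u). -/
def dirSingSubdiff {n : ℕ} (f : Euc n → EReal) (xb u : Euc n) : Set (Euc n) :=
  {ξ | ∃ xk ξk : ℕ → Euc n, ∃ τ : ℕ → ℝ, TendstoDir xk xb u ∧
    (∀ k, 0 < τ k) ∧ Tendsto τ atTop (𝓝 0) ∧
    Tendsto (fun k => τ k • ξk k) atTop (𝓝 ξ) ∧
    Tendsto (fun k => f (xk k)) atTop (𝓝 (f xb)) ∧
    ∀ k, ξk k ∈ regSubdiff f (xk k)}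

/-- f is continuous at xb in direction u. -/
def DirContinuous {n : ℕ} (f : Euc n → EReal) (xb u : Euc n) : Prop :=
  ∀ xk : ℕ → Euc n, TendstoDir xk xb u →
    Tendsto (fun k => f (xk k)) atTop (𝓝 (f xb))

/-- f is locally lower semicontinuous at xb in direction u (with f xb = fx ∈ ℝ). -/
def DirLocLSC {n : ℕ} (f : Euc n → EReal) (xb u : Euc n) (fx : ℝ) : Prop :=
  ∃ ε > (0:ℝ), ∃ δ > (0:ℝ), IsClosed
    ({p : Euc n × ℝ | f p.1 ≤ (p.2 : EReal)} ∩
     (closure (dirNbhdPt xb ε δ u) ×ˢ Metric.closedBall fx ε))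

/-- f is Lipschitz continuous around xb in direction u. -/
def DirLipschitz {n : ℕ} (f : Euc n → EReal) (xb u : Euc n) : Prop :=
  ∃ L : ℝ, ∃ ε > (0:ℝ), ∃ δ > (0:ℝ),
    ∀ a ∈ dirNbhdPt xb ε δ u, ∀ b ∈ dirNbhdPt xb ε δ u,
      ∃ fa fb : ℝ, f a = (fa : EReal) ∧ f b = (fb : EReal) ∧
        |fa - fb| ≤ L * ‖a - b‖

/-- The optimal value function of the parametric problem min f(x,y) s.t. P(x,y) ∈ Γ. -/
def valueFn {n m p : ℕ} (f : Euc n × Euc m → ℝ) (P : Euc n × Euc m → Euc p)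
    (Γ : Set (Euc p)) (x : Euc n) : EReal :=
  sInf ((fun y => ((f (x, y) : ℝ) : EReal)) '' {y | P (x, y) ∈ Γ})

/-- The solution map of the parametric problem. -/
def solnSet {n m p : ℕ} (f : Euc n × Euc m → ℝ) (P : Euc n × Euc m → Euc p)
    (Γ : Set (Euc p)) (x : Euc n) : Set (Euc m) :=
  {y | P (x, y) ∈ Γ ∧ ((f (x, y) : ℝ) : EReal) = valueFn f P Γ x}

/-- The graphical derivative of φ at x in direction u. -/
def graphDeriv {n m : ℕ} (φ : Euc n → Euc m) (x u : Euc n) : Set (Euc m) :=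
  {d | ∃ t : ℕ → ℝ, ∃ uk : ℕ → Euc n, (∀ k, 0 < t k) ∧ Tendsto t atTop (𝓝 0) ∧
    Tendsto uk atTop (𝓝 u) ∧
    Tendsto (fun k => (t k)⁻¹ • (φ (x + t k • uk k) - φ x)) atTop (𝓝 d)}

end
/-- The value function V(x) = inf_{y ∈ Γ} f(x,y), with values in EReal. -/
noncomputable def valueOn {n m : ℕ} (f : Euc n × Euc m → ℝ) (Γ : Set (Euc m))
    (x : Euc n) : EReal :=
  sInf ((fun y => ((f (x, y) : ℝ) : EReal)) '' Γ)



lemma reg_eq_grad {n : ℕ} (h : Euc n → ℝ) (G ξ x : Euc n) (hG : HasGradientAt h G x)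
    (hsub : ∀ ε > (0:ℝ), ∃ ρ > (0:ℝ), ∀ y, ‖y - x‖ < ρ →
      h x + ((@inner ℝ _ _ ξ (y - x)) - ε * ‖y - x‖) ≤ h y) : ξ = G := by
  have key : ∀ w : Euc n, (@inner ℝ _ _ ξ w) ≤ @inner ℝ _ _ G w := by
    intro w
    have hc : HasDerivAt (fun t : ℝ => x + t • w) w 0 := by
      simpa using ((hasDerivAt_id (0:ℝ)).smul_const w).const_add x
    have hderiv : HasDerivAt (fun t : ℝ => h (x + t • w)) (@inner ℝ _ _ G w) 0 := by
      have hGf := hG.hasFDerivAt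
      rw [show x = x + (0:ℝ) • w by simp] at hGf
      have := hGf.comp_hasDerivAt 0 hc
      simp [InnerProductSpace.toDual_apply_apply] at this; exact this
    have hslope := hasDerivAt_iff_tendsto_slope.mp hderiv
    have hslope' : Tendsto (slope (fun t : ℝ => h (x + t • w)) 0) (𝓝[>] 0)
        (𝓝 (@inner ℝ _ _ G w)) :=
      hslope.mono_left (nhdsWithin_mono _ (fun t ht => ne_of_gt ht))
    have hle : ∀ ε > (0:ℝ), @inner ℝ _ _ ξ w - ε * ‖w‖ ≤ @inner ℝ _ _ G w := by
      intro ε hε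
      obtain ⟨ρ, hρ, hρle⟩ := hsub ε hε
      refine ge_of_tendsto hslope' ?_
      have hev : ∀ᶠ t in 𝓝[>] (0:ℝ), t < ρ / (‖w‖ + 1) := by
        apply eventually_nhdsWithin_of_eventually_nhds
        exact Filter.Tendsto.eventually_lt_const (by positivity) tendsto_id
      filter_upwards [hev, self_mem_nhdsWithin] with t htρ (ht : 0 < t)
      have hnorm : ‖x + t • w - x‖ = t * ‖w‖ := by
        simp [norm_smul, abs_of_pos ht]
      have hlt : ‖x + t • w - x‖ < ρ := by
        rw [hnorm]
        calc t * ‖w‖ ≤ t * (‖w‖ + 1) := by nlinarith [norm_nonneg w]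
          _ < ρ / (‖w‖+1) * (‖w‖+1) := by
              apply mul_lt_mul_of_pos_right htρ (by positivity)
          _ = ρ := by field_simp
      have := hρle (x + t • w) hlt
      have hin : (@inner ℝ _ _ ξ (x + t • w - x)) = t * @inner ℝ _ _ ξ w := by
        simp [inner_smul_right]
      rw [hin, hnorm] at this
      have : t * (@inner ℝ _ _ ξ w - ε * ‖w‖) ≤ h (x + t • w) - h x := by ring_nf; ring_nf at this; linarith
      have hdiv : @inner ℝ _ _ ξ w - ε * ‖w‖ ≤ (h (x + t • w) - h x) / t :=
        (le_div_iff₀ ht).mpr (by linarith [this])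
      have hsl : slope (fun t : ℝ => h (x + t • w)) 0 t = (h (x + t • w) - h x) / t := by
        rw [slope_def_field]; simp
      rw [hsl]; exact hdiv
    by_cases hw : w = 0
    · simp [hw]
    · refine le_of_forall_pos_le_add fun ε hε => ?_
      have hwn : (0:ℝ) < ‖w‖ := norm_pos_iff.mpr hw
      have := hle (ε / ‖w‖) (div_pos hε hwn)
      have : @inner ℝ _ _ ξ w - ε ≤ @inner ℝ _ _ G w := by
        rw [div_mul_cancel₀] at this; exact this; positivity
      linarith
  have h0 : @inner ℝ _ _ (ξ - G) (ξ - G) ≤ 0 := by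
    have := key (ξ - G)
    rw [inner_sub_left]
    linarith
  have := real_inner_self_nonpos.mp h0
  exact sub_eq_zero.mp this

theorem stmt_16 {n m : ℕ} (f : Euc n × Euc m → ℝ) (Γ : Set (Euc m))
    (hf : Continuous f) (hΓ : IsClosed Γ) (xb u : Euc n)
    (U : Set (Euc n)) (hU : U ∈ 𝓝 xb) (g : Euc n × Euc m → Euc n)
    (hgc : ContinuousOn g (U ×ˢ Γ))
    (hgrad : ∀ x ∈ U, ∀ y ∈ Γ, HasGradientAt (fun x' => f (x', y)) (g (x, y)) x)
    (yb : Euc m) (hyΓ : yb ∈ Γ)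
    (hopt : ((f (xb, yb) : ℝ) : EReal) = valueOn f Γ xb)
    (hisc : ∀ (t : ℕ → ℝ) (v : ℕ → Euc n), (∀ k, 0 < t k) →
      Tendsto t atTop (𝓝 0) → Tendsto v atTop (𝓝 u) →
      ∃ yk : ℕ → Euc m, (∀ k, yk k ∈ Γ ∧
          ((f (xb + t k • v k, yk k) : ℝ) : EReal) =
            valueOn f Γ (xb + t k • v k)) ∧
        Tendsto yk atTop (𝓝 yb)) :
    dirLimSubdiff (valueOn f Γ) xb u ⊆ {g (xb, yb)} := by
  intro ξ hξ
  obtain ⟨xk, ξk, ⟨t, v, ht, ht0, hv, hxk⟩, hVconv, hξtend, hreg⟩ := hξ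
  obtain ⟨yk, hyk, hyktend⟩ := hisc t v ht ht0 hv
  -- xk tends to xb
  have hxtend : Tendsto xk atTop (𝓝 xb) := by
    have : Tendsto (fun k => xb + t k • v k) atTop (𝓝 (xb + (0:ℝ) • u)) :=
      tendsto_const_nhds.add (ht0.smul hv)
    simpa [funext hxk] using this
  have hxU : ∀ᶠ k in atTop, xk k ∈ U := hxtend.eventually_mem hU
  -- eventually ξk k = g (xk k, yk k)
  have heq : ∀ᶠ k in atTop, ξk k = g (xk k, yk k) := by
    filter_upwards [hxU] with k hkU
    have hykΓ : yk k ∈ Γ := (hyk k).1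
    have hGr := hgrad (xk k) hkU (yk k) hykΓ
    apply reg_eq_grad (fun x' => f (x', yk k)) _ _ (xk k) hGr
    intro ε hε
    obtain ⟨ρ, hρ, hρle⟩ := hreg k ε hε
    refine ⟨ρ, hρ, fun y hy => ?_⟩
    have h1 := hρle y hy
    have h2 : valueOn f Γ y ≤ ((f (y, yk k) : ℝ) : EReal) :=
      sInf_le ⟨yk k, hykΓ, rfl⟩
    have hfeq : ((f (xk k, yk k) : ℝ) : EReal) = valueOn f Γ (xk k) := by
      rw [hxk k]; exact (hyk k).2
    rw [← hfeq] at h1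
    have h3 : ((f (xk k, yk k) + ((@inner ℝ _ _ (ξk k) (y - xk k)) - ε * ‖y - xk k‖) : ℝ) : EReal)
        ≤ ((f (y, yk k) : ℝ) : EReal) := by
      rw [EReal.coe_add]
      exact le_trans h1 h2
    exact_mod_cast h3
  -- g (xk k, yk k) tendsto g (xb, yb)
  have hxy : Tendsto (fun k => (xk k, yk k)) atTop (𝓝 (xb, yb)) :=
    hxtend.prodMk_nhds hyktend
  have hmem : ∀ᶠ k in atTop, (xk k, yk k) ∈ U ×ˢ Γ := by
    filter_upwards [hxU] with k hkU
    exact ⟨hkU, (hyk k).1⟩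
  have hcw : ContinuousWithinAt g (U ×ˢ Γ) (xb, yb) :=
    hgc (xb, yb) ⟨mem_of_mem_nhds hU, hyΓ⟩
  have hgtend : Tendsto (fun k => g (xk k, yk k)) atTop (𝓝 (g (xb, yb))) :=
    hcw.tendsto.comp (tendsto_nhdsWithin_iff.mpr ⟨hxy, hmem⟩)
  have : Tendsto ξk atTop (𝓝 (g (xb, yb))) :=
    hgtend.congr' (heq.mono fun k h => h.symm)
  exact tendsto_nhds_unique hξtend this
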